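/- In the exchangeable Gaussian model X ~ N_m(θ1_m, Σ) with Σ = (1−ρ)I_m + ρ1_m1_mᵀ, 0 < ρ < 1, and marginal scores u_j(θ) = X_j − θ, the minimizer of Q_λ(θ*, w) has all coordinates equal: w*_{λ,j} = (1−λ)/(ρ(m−1)+1) for λ < 1 and w*_{λ,j} = 0 for λ ≥ 1, for every 1 ≤ j ≤ m. -/
import Mathlib

open Matrix in
/-- In the exchangeable Gaussian model the minimizer of the reduced criterion
(1/2)wᵀΣw − 1ᵀw + λ‖w‖₁ has all coordinates equal to (1−λ)/(ρ(m−1)+1) for λ < 1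
and 0 for λ ≥ 1. -/
theorem stmt_10 {m : ℕ} (hm : 1 ≤ m) (ρ lam : ℝ) (hρ : 0 < ρ) (hρ1 : ρ < 1)
    (hlam : 0 < lam)
    (S : Matrix (Fin m) (Fin m) ℝ)
    (hS : ∀ j k, S j k = if j = k then 1 else ρ)
    (Q : (Fin m → ℝ) → ℝ)
    (hQ : ∀ w, Q w = (1/2) * (w ⬝ᵥ S.mulVec w) - ∑ j, w j + lam * ∑ j, |w j|)
    (wstar : Fin m → ℝ)
    (hws : ∀ j, wstar j = if lam < 1 then (1 - lam) / (ρ * ((m : ℝ) - 1) + 1) else 0) :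
    ∀ v, Q wstar ≤ Q v := by
  intro v
  have hm1 : (1:ℝ) ≤ (m:ℝ) := by exact_mod_cast hm
  have ha : 0 < ρ * ((m:ℝ) - 1) + 1 := by nlinarith
  -- quadratic form identity
  have key : ∀ w : Fin m → ℝ,
      w ⬝ᵥ S.mulVec w = (1-ρ) * (∑ j, (w j)^2) + ρ * (∑ j, w j)^2 := by
    intro w
    have hinner : ∀ j : Fin m, (S.mulVec w) j = (1-ρ) * w j + ρ * ∑ k, w k := by
      intro j
      simp only [Matrix.mulVec, dotProduct, hS]
      have : ∀ k : Fin m, (if j = k then (1:ℝ) else ρ) * w k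
          = ρ * w k + (if j = k then (1-ρ) * w k else 0) := by
        intro k; split <;> ring
      rw [Finset.sum_congr rfl fun k _ => this k, Finset.sum_add_distrib,
        Finset.sum_ite_eq (Finset.univ) j (fun k => (1-ρ) * w k)]
      rw [add_comm, Finset.mul_sum]
      simp
    simp only [dotProduct, hinner]
    have : ∀ j : Fin m, w j * ((1-ρ) * w j + ρ * ∑ k, w k)
        = (1-ρ) * (w j)^2 + (w j * (ρ * ∑ k, w k)) := by intro j; ring
    rw [Finset.sum_congr rfl fun j _ => this j, Finset.sum_add_distrib,
      ← Finset.sum_mul, ← Finset.mul_sum]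
    ring
  set A := ∑ j, (v j)^2 with hA
  set B := ∑ j, v j with hB
  set C := ∑ j, |v j| with hC
  have hA0 : 0 ≤ A := Finset.sum_nonneg fun j _ => sq_nonneg _
  have hBC : B ≤ C := Finset.sum_le_sum fun j _ => le_abs_self _
  have hC0 : 0 ≤ C := Finset.sum_nonneg fun j _ => abs_nonneg _
  have hQv : Q v = (1/2) * ((1-ρ) * A + ρ * B^2) - B + lam * C := by
    rw [hQ, key]
  by_cases hl : lam < 1
  · set c : ℝ := (1 - lam) / (ρ * ((m:ℝ) - 1) + 1) with hcdef
    have hc0 : 0 ≤ c := div_nonneg (by linarith) ha.le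
    have hca : c * (ρ * ((m:ℝ) - 1) + 1) = 1 - lam := div_mul_cancel₀ _ ha.ne'
    have hwc : ∀ j, wstar j = c := by intro j; rw [hws j, if_pos hl]
    have hsum : ∑ j, wstar j = (m:ℝ) * c := by
      simp [hwc, Finset.sum_const, mul_comm]
    have hsq : ∑ j, (wstar j)^2 = (m:ℝ) * c^2 := by
      simp [hwc, Finset.sum_const, mul_comm]
    have habs : ∑ j, |wstar j| = (m:ℝ) * c := by
      simp [hwc, abs_of_nonneg hc0, Finset.sum_const, mul_comm]
    have hQw : Q wstar = (1/2) * ((1-ρ) * ((m:ℝ) * c^2) + ρ * ((m:ℝ) * c)^2)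
        - (m:ℝ) * c + lam * ((m:ℝ) * c) := by
      rw [hQ, key, hsum, hsq, habs]
    have hsid : ∑ j, (v j - c)^2 = A - 2*c*B + (m:ℝ)*c^2 := by
      have : ∀ j : Fin m, (v j - c)^2 = (v j)^2 - 2*c*(v j) + c^2 := by intro j; ring
      rw [Finset.sum_congr rfl fun j _ => this j]
      rw [Finset.sum_add_distrib, Finset.sum_sub_distrib, ← Finset.mul_sum]
      simp [hA, hB, mul_comm]
    have hsq0 : 0 ≤ A - 2*c*B + (m:ℝ)*c^2 := hsid ▸ Finset.sum_nonneg fun j _ => sq_nonneg _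
    have hD : Q v - Q wstar = (1/2)*(1-ρ)*(A - 2*c*B + (m:ℝ)*c^2)
        + (ρ/2)*(B - (m:ℝ)*c)^2 + lam*(C - B) := by
      rw [hQv, hQw]
      linear_combination (B - (m:ℝ)*c) * hca
    nlinarith [mul_nonneg (by linarith : (0:ℝ) ≤ 1-ρ) hsq0,
      mul_nonneg hρ.le (sq_nonneg (B - (m:ℝ)*c)),
      mul_nonneg hlam.le (by linarith : (0:ℝ) ≤ C - B)]
  · push_neg at hl
    have hwc : ∀ j, wstar j = 0 := by intro j; rw [hws j, if_neg (not_lt.2 hl)]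
    have hQw : Q wstar = 0 := by
      rw [hQ, key]; simp [hwc]
    rw [hQw, hQv]
    nlinarith [mul_nonneg (by linarith : (0:ℝ) ≤ 1-ρ) hA0,
      mul_nonneg hρ.le (sq_nonneg B),
      mul_nonneg (by linarith : (0:ℝ) ≤ lam - 1) hC0]
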